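/- Let n, p, q be finite index types with |n| = d, let A be a real n×p matrix, B a real n×q matrix, and let γ > 0, μ > 0. Then the matrices B·Bᵀ + μ·1ₙ and 1_q + (1/μ)·Bᵀ·B are positive definite (hence invertible), and tr( (B·Bᵀ + μ·1ₙ)⁻¹·(A·Aᵀ + γ·1ₙ) − 1ₙ ) − log det( (B·Bᵀ + μ·1ₙ)⁻¹·(A·Aᵀ + γ·1ₙ) ) = (γ/μ − 1 − log(γ/μ))·d + (1/μ)·tr(Aᵀ·A) − (γ/μ)·tr[ ( (1/μ)·Bᵀ·B + (1/(γ·μ))·Bᵀ·A·Aᵀ·B ) · ( 1_q + (1/μ)·Bᵀ·B )⁻¹ ] + log det( (1/μ)·Bᵀ·B + 1_q ) − log det( (1/γ)·Aᵀ·A + 1ₚ ). -/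

import Mathlib

open Matrix Real

lemma aux_psd_smul {m : Type*} [Fintype m] {M : Matrix m m ℝ} (hM : M.PosSemidef)
    {c : ℝ} (hc : 0 ≤ c) : (c • M).PosSemidef := by
  have ht : Mᵀ = M := by
    have h := hM.1.eq; simpa [Matrix.conjTranspose_eq_transpose_of_trivial] using h
  rw [Matrix.posSemidef_iff_dotProduct_mulVec]
  refine ⟨by simp [Matrix.IsHermitian, ht], fun x => ?_⟩
  rw [smul_mulVec, dotProduct_smul]
  exact smul_nonneg hc ((Matrix.posSemidef_iff_dotProduct_mulVec.mp hM).2 x)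

lemma aux_pd_smul_one {m : Type*} [Fintype m] [DecidableEq m]
    {c : ℝ} (hc : 0 < c) : (c • (1 : Matrix m m ℝ)).PosDef := by
  rw [Matrix.posDef_iff_dotProduct_mulVec]
  refine ⟨by simp [Matrix.IsHermitian], fun x hx => ?_⟩
  rw [smul_mulVec, dotProduct_smul, one_mulVec]
  exact smul_pos hc (Matrix.dotProduct_star_self_pos_iff.mpr hx)

lemma aux_psd_mul_transpose {m l : Type*} [Fintype m] [Fintype l]
    (B : Matrix m l ℝ) : (B * Bᵀ).PosSemidef := by
  simpa using Matrix.posSemidef_self_mul_conjTranspose B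

lemma aux_psd_transpose_mul {m l : Type*} [Fintype m] [Fintype l]
    (B : Matrix m l ℝ) : (Bᵀ * B).PosSemidef := by
  simpa using Matrix.posSemidef_conjTranspose_mul_self B

theorem logdet_alpha_one_divergence_finite_dim
    {n p q : Type*} [Fintype n] [Fintype p] [Fintype q]
    [DecidableEq n] [DecidableEq p] [DecidableEq q]
    (d : ℕ) (hd : Fintype.card n = d)
    (A : Matrix n p ℝ) (B : Matrix n q ℝ)
    (γ μ : ℝ) (hγ : 0 < γ) (hμ : 0 < μ) :
    (B * Bᵀ + μ • (1 : Matrix n n ℝ)).PosDef ∧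
    ((1 : Matrix q q ℝ) + (1 / μ) • (Bᵀ * B)).PosDef ∧
    ((B * Bᵀ + μ • (1 : Matrix n n ℝ))⁻¹ * (A * Aᵀ + γ • (1 : Matrix n n ℝ)) - 1).trace
        - Real.log (((B * Bᵀ + μ • (1 : Matrix n n ℝ))⁻¹ *
            (A * Aᵀ + γ • (1 : Matrix n n ℝ))).det)
      = (γ / μ - 1 - Real.log (γ / μ)) * d
        + (1 / μ) * (Aᵀ * A).trace
        - (γ / μ) * ((((1 / μ) • (Bᵀ * B) + (1 / (γ * μ)) • (Bᵀ * A * Aᵀ * B)) *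
            ((1 : Matrix q q ℝ) + (1 / μ) • (Bᵀ * B))⁻¹).trace)
        + Real.log (((1 / μ) • (Bᵀ * B) + 1).det)
        - Real.log (((1 / γ) • (Aᵀ * A) + 1).det) := by
  have hμ0 : μ ≠ 0 := hμ.ne'
  have hγ0 : γ ≠ 0 := hγ.ne'
  set Y : Matrix n n ℝ := B * Bᵀ + μ • (1 : Matrix n n ℝ) with hYdef
  set X : Matrix n n ℝ := A * Aᵀ + γ • (1 : Matrix n n ℝ) with hXdef
  set M : Matrix q q ℝ := (1 : Matrix q q ℝ) + (1 / μ) • (Bᵀ * B) with hMdef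
  have hY : Y.PosDef := Matrix.PosDef.posSemidef_add (aux_psd_mul_transpose B) (aux_pd_smul_one hμ)
  have hX : X.PosDef := Matrix.PosDef.posSemidef_add (aux_psd_mul_transpose A) (aux_pd_smul_one hγ)
  have hM : M.PosDef :=
    Matrix.PosDef.add_posSemidef Matrix.PosDef.one
      (aux_psd_smul (aux_psd_transpose_mul B) (by positivity))
  refine ⟨hY, hM, ?_⟩
  have hYu : IsUnit Y.det := hY.det_pos.ne'.isUnit
  have hMu : IsUnit M.det := hM.det_pos.ne'.isUnit
  have hYY : Y⁻¹ * Y = 1 := Matrix.nonsing_inv_mul Y hYu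
  have hMM : M * M⁻¹ = 1 := Matrix.mul_nonsing_inv M hMu
  -- push-through identity
  have hYB : Y⁻¹ * B = μ⁻¹ • (B * M⁻¹) := by
    have h1 : Y * B = μ • (B * M) := by
      rw [hYdef, hMdef]
      simp only [Matrix.add_mul, Matrix.mul_add, Matrix.mul_one, smul_add,
        Matrix.mul_smul, smul_smul, Matrix.smul_mul, Matrix.one_mul,
        mul_one_div, div_self hμ0, one_smul, Matrix.mul_assoc]
      abel
    have h2 : Y⁻¹ * (Y * B * M⁻¹) = B * M⁻¹ := by
      rw [← Matrix.mul_assoc, ← Matrix.mul_assoc, hYY, Matrix.one_mul]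
    rw [h1] at h2
    rw [← h2, Matrix.smul_mul, Matrix.mul_smul, Matrix.mul_assoc B, hMM,
      Matrix.mul_one, smul_smul, inv_mul_cancel₀ hμ0, one_smul]
  -- explicit inverse of Y
  have hYinv : Y⁻¹ = μ⁻¹ • ((1 : Matrix n n ℝ) - μ⁻¹ • (B * M⁻¹ * Bᵀ)) := by
    have h1 : Y⁻¹ * (B * Bᵀ) + μ • Y⁻¹ = 1 := by
      have := hYY
      rw [hYdef] at this
      rw [← this, Matrix.mul_add, Matrix.mul_smul, Matrix.mul_one]
    have h2 : Y⁻¹ * (B * Bᵀ) = μ⁻¹ • (B * M⁻¹ * Bᵀ) := by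
      rw [← Matrix.mul_assoc, hYB, Matrix.smul_mul]
    rw [h2] at h1
    have h3 : μ • Y⁻¹ = 1 - μ⁻¹ • (B * M⁻¹ * Bᵀ) := by
      rw [← h1]; abel
    calc Y⁻¹ = μ⁻¹ • (μ • Y⁻¹) := by rw [smul_smul, inv_mul_cancel₀ hμ0, one_smul]
    _ = μ⁻¹ • ((1 : Matrix n n ℝ) - μ⁻¹ • (B * M⁻¹ * Bᵀ)) := by rw [h3]
  -- traces
  have htrX : X.trace = (Aᵀ * A).trace + γ * d := by
    rw [hXdef, Matrix.trace_add, Matrix.trace_smul, Matrix.trace_one,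
      Matrix.trace_mul_comm, hd, smul_eq_mul]
  have hBXB : Bᵀ * X * B = Bᵀ * A * Aᵀ * B + γ • (Bᵀ * B) := by
    rw [hXdef, Matrix.mul_add, Matrix.add_mul, Matrix.mul_smul, Matrix.smul_mul,
      Matrix.mul_one, Matrix.mul_assoc, Matrix.mul_assoc, ← Matrix.mul_assoc A,
      ← Matrix.mul_assoc Bᵀ, ← Matrix.mul_assoc Bᵀ]
  set t1 : ℝ := ((Bᵀ * B) * M⁻¹).trace with ht1
  set t2 : ℝ := ((Bᵀ * A * Aᵀ * B) * M⁻¹).trace with ht2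
  have htrBMBX : (B * M⁻¹ * Bᵀ * X).trace = t2 + γ * t1 := by
    have : (B * M⁻¹ * Bᵀ * X).trace = ((M⁻¹ * (Bᵀ * X)) * B).trace := by
      rw [Matrix.mul_assoc, Matrix.mul_assoc, Matrix.trace_mul_comm]
    rw [this, Matrix.mul_assoc M⁻¹, hBXB, Matrix.mul_add, Matrix.trace_add,
      Matrix.mul_smul, Matrix.trace_smul,
      Matrix.trace_mul_comm, ← ht2, Matrix.trace_mul_comm, ← ht1, smul_eq_mul]
  have htr : (Y⁻¹ * X - 1).trace
      = μ⁻¹ * ((Aᵀ * A).trace + γ * d - μ⁻¹ * (t2 + γ * t1)) - d := by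
    rw [Matrix.trace_sub, Matrix.trace_one, hd, hYinv, Matrix.smul_mul,
      Matrix.sub_mul, Matrix.one_mul, Matrix.smul_mul, Matrix.trace_smul,
      Matrix.trace_sub, Matrix.trace_smul, htrBMBX, htrX, smul_eq_mul, smul_eq_mul]
  -- determinants
  have hdetY : Y.det = μ ^ d * ((1 / μ) • (Bᵀ * B) + 1).det := by
    have h1 : Y = μ • ((1 / μ) • (B * Bᵀ) + 1) := by
      rw [smul_add, smul_smul, mul_one_div, div_self hμ0, one_smul, hYdef]
    rw [h1, Matrix.det_smul, hd]
    congr 1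
    rw [show (1 / μ) • (B * Bᵀ) = ((1 / μ) • B) * Bᵀ from (Matrix.smul_mul _ _ _).symm,
      add_comm, Matrix.det_one_add_mul_comm, Matrix.mul_smul, add_comm]
  have hdetX : X.det = γ ^ d * ((1 / γ) • (Aᵀ * A) + 1).det := by
    have h1 : X = γ • ((1 / γ) • (A * Aᵀ) + 1) := by
      rw [smul_add, smul_smul, mul_one_div, div_self hγ0, one_smul, hXdef]
    rw [h1, Matrix.det_smul, hd]
    congr 1
    rw [show (1 / γ) • (A * Aᵀ) = ((1 / γ) • A) * Aᵀ from (Matrix.smul_mul _ _ _).symm,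
      add_comm, Matrix.det_one_add_mul_comm, Matrix.mul_smul, add_comm]
  have hMdet_pos : 0 < ((1 / μ) • (Bᵀ * B) + 1).det := by
    rw [add_comm]; exact hM.det_pos
  have hAdet_pos : 0 < ((1 / γ) • (Aᵀ * A) + 1).det := by
    rw [add_comm]
    exact (Matrix.PosDef.add_posSemidef Matrix.PosDef.one
      (aux_psd_smul (aux_psd_transpose_mul A) (by positivity))).det_pos
  have hMd0 : ((1 / μ) • (Bᵀ * B) + 1).det ≠ 0 := hMdet_pos.ne'
  have hAd0 : ((1 / γ) • (Aᵀ * A) + 1).det ≠ 0 := hAdet_pos.ne'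
  have hdetYX : (Y⁻¹ * X).det = Y.det⁻¹ * X.det := by
    rw [Matrix.det_mul, Matrix.det_nonsing_inv, Ring.inverse_eq_inv]
  have hlog : Real.log ((Y⁻¹ * X).det)
      = (d * Real.log γ + Real.log (((1 / γ) • (Aᵀ * A) + 1).det))
        - (d * Real.log μ + Real.log (((1 / μ) • (Bᵀ * B) + 1).det)) := by
    rw [hdetYX, Real.log_mul (inv_ne_zero hY.det_pos.ne') hX.det_pos.ne', Real.log_inv,
      hdetX, hdetY, Real.log_mul (pow_ne_zero d hγ0) hAd0,
      Real.log_mul (pow_ne_zero d hμ0) hMd0, Real.log_pow, Real.log_pow]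
    ring
  have hrhstr : (((1 / μ) • (Bᵀ * B) + (1 / (γ * μ)) • (Bᵀ * A * Aᵀ * B)) * M⁻¹).trace
      = (1 / μ) * t1 + (1 / (γ * μ)) * t2 := by
    rw [Matrix.add_mul, Matrix.trace_add, Matrix.smul_mul, Matrix.smul_mul,
      Matrix.trace_smul, Matrix.trace_smul, smul_eq_mul, smul_eq_mul]
  rw [htr, hlog, hrhstr, Real.log_div hγ0 hμ0]
  field_simp
  ring
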